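/- Let a and b be Laurent polynomials over ℂ having symmetry with types ε_a z^{c_a} and ε_b z^{c_b}, and suppose b ≠ 0. (i) If ε_aε_b = 1, or if ε_aε_b = −1 and c_a − c_b is odd, then there exists a Laurent polynomial q having symmetry with type ε_aε_b z^{c_a−c_b} such that r(z) := a(z) − b(z)q(z) has symmetry with type ε_a z^{c_a} and len(r) < len(b). (ii) If ε_aε_b = −1 and c_a − c_b is even, then there exists a Laurent polynomial q having symmetry with type ε_aε_b z^{c_a−c_b} such that r(z) := a(z) − b(z)q(z) has symmetry with type ε_a z^{c_a} and len(r) ≤ len(b). -/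

import Mathlib

open LaurentPolynomial Matrix
open scoped Classical

noncomputable section

abbrev LP := LaurentPolynomial ℂ

namespace QT

/-- The coefficient of `z^k` in a Laurent polynomial. -/
def coeff (u : LP) (k : ℤ) : ℂ := (show ℤ →₀ ℂ from AddMonoidAlgebra.coeff u) k

/-- The Hermitian conjugate `u⋆(z) = Σ conj(u(k)) z^{-k}`. -/
def hstar (u : LP) : LP :=
  AddMonoidAlgebra.ofCoeff <| show ℤ →₀ ℂ from
    Finsupp.mapDomain (fun k => -k)
      (Finsupp.mapRange (starRingEnd ℂ) (map_zero _) (show ℤ →₀ ℂ from AddMonoidAlgebra.coeff u))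

/-- `u` has symmetry with type `ε z^c`, i.e. `u(k) = ε u(c-k)` for all `k`. -/
def SymT (u : LP) (ε : ℂ) (c : ℤ) : Prop := ∀ k : ℤ, coeff u k = ε * coeff u (c - k)

def Sgn (ε : ℂ) : Prop := ε = 1 ∨ ε = -1

/-- `u` has symmetry (with some type). -/
def HasSym (u : LP) : Prop := ∃ ε c, Sgn ε ∧ SymT u ε c

/-- The Laurent polynomial `z - a`. -/
def zsub (a : ℂ) : LP := T 1 - LaurentPolynomial.C a

/-- `m` is the multiplicity of `z₀` as a zero of `u`. -/
def mzIs (u : LP) (z₀ : ℂ) (m : ℕ) : Prop := zsub z₀ ^ m ∣ u ∧ ¬ zsub z₀ ^ (m + 1) ∣ u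

/-- The multiplicity of `z₀` as a zero of `u`, as a function. -/
def mzF (u : LP) (z₀ : ℂ) : ℕ := sSup {m : ℕ | zsub z₀ ^ m ∣ u}

/-- The difference-of-(Hermitian)-squares property with respect to symmetry type `ε z^c`. -/
def DOS (u : LP) (ε : ℂ) (c : ℤ) : Prop :=
  ∃ (u₁ u₂ : LP) (ε₁ ε₂ : ℂ) (c₁ c₂ : ℤ),
    Sgn ε₁ ∧ Sgn ε₂ ∧ SymT u₁ ε₁ c₁ ∧ SymT u₂ ε₂ c₂ ∧
    u₁ * hstar u₁ - u₂ * hstar u₂ = u ∧ ε₁ * ε₂ = ε ∧ c₁ - c₂ = c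

/-- Degree: the largest exponent with nonzero coefficient (0 for the zero polynomial). -/
def degL (u : LP) : ℤ :=
  if h : u = 0 then 0
  else (show ℤ →₀ ℂ from AddMonoidAlgebra.coeff u).support.max' (Finsupp.support_nonempty_iff.mpr (AddMonoidAlgebra.coeff_eq_zero.not.mpr h))

/-- Lower degree: the smallest exponent with nonzero coefficient (0 for zero). -/
def ldegL (u : LP) : ℤ :=
  if h : u = 0 then 0
  else (show ℤ →₀ ℂ from AddMonoidAlgebra.coeff u).support.min' (Finsupp.support_nonempty_iff.mpr (AddMonoidAlgebra.coeff_eq_zero.not.mpr h))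

/-- Length `deg - ldeg`, with `len 0 = ⊥`. -/
def lenL (u : LP) : WithBot ℤ := if u = 0 then ⊥ else ((degL u - ldegL u : ℤ) : WithBot ℤ)

/-- `g` is a greatest common divisor of `a` and `b`. -/
def IsGCD2 (g a b : LP) : Prop := g ∣ a ∧ g ∣ b ∧ ∀ e : LP, e ∣ a → e ∣ b → e ∣ g

/-- `g` is a greatest common divisor of `a`, `b`, `c`, `d`. -/
def IsGCD4 (g a b c d : LP) : Prop :=
  g ∣ a ∧ g ∣ b ∧ g ∣ c ∧ g ∣ d ∧ ∀ e : LP, e ∣ a → e ∣ b → e ∣ c → e ∣ d → e ∣ g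

/-- The Hermitian conjugate transpose of a matrix of Laurent polynomials. -/
def hstarM (A : Matrix (Fin 2) (Fin 2) LP) : Matrix (Fin 2) (Fin 2) LP :=
  fun i j => hstar (A j i)

def IsHerm (A : Matrix (Fin 2) (Fin 2) LP) : Prop := hstarM A = A

/-- `diag(1, -1)`. -/
def Jmat : Matrix (Fin 2) (Fin 2) LP := Matrix.diagonal ![1, -1]

/-- A square matrix of Laurent polynomials is strongly invertible if its determinant is a
nonzero monomial. -/
def StrongInv (A : Matrix (Fin 2) (Fin 2) LP) : Prop :=
  ∃ (lam : ℂ) (k : ℤ), lam ≠ 0 ∧ A.det = LaurentPolynomial.C lam * T k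

/-- Compatible symmetry for a `2×2` matrix of Laurent polynomials. -/
def CompatSym (A : Matrix (Fin 2) (Fin 2) LP) : Prop :=
  ∃ (ε ε' : Fin 2 → ℂ) (c c' : Fin 2 → ℤ),
    (∀ j, Sgn (ε j)) ∧ (∀ k, Sgn (ε' k)) ∧
    ∀ j k, SymT (A j k) (ε j * ε' k) (c' k - c j)

/-- Substitution `z ↦ z²`. -/
def sqDom (u : LP) : LP :=
  AddMonoidAlgebra.ofCoeff <| show ℤ →₀ ℂ from Finsupp.mapDomain (fun k => 2 * k) (show ℤ →₀ ℂ from AddMonoidAlgebra.coeff u)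

/-- Substitution `z ↦ -z`. -/
def negSub (u : LP) : LP :=
  (show ℤ →₀ ℂ from AddMonoidAlgebra.coeff u).sum fun k c => show LP from AddMonoidAlgebra.ofCoeff <| Finsupp.single k ((-1 : ℂ) ^ k * c)

/-- The `γ`-coset `u^{[γ]}(z) = Σ_k u(γ + 2k) z^k`. -/
def cosetL (u : LP) (γ : ℤ) : LP :=
  AddMonoidAlgebra.ofCoeff <| show ℤ →₀ ℂ from
    Finsupp.comapDomain (fun k : ℤ => γ + 2 * k) (show ℤ →₀ ℂ from AddMonoidAlgebra.coeff u)
      (by intro a _ b _ h; simp only at h; omega)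

/-- Evaluation of a Laurent polynomial at a point. -/
def evalL (u : LP) (z : ℂ) : ℂ := (show ℤ →₀ ℂ from AddMonoidAlgebra.coeff u).sum fun k c => c * z ^ k

/-- `{a; b₁, b₂}_{Θ,(1,-1)}` is a quasi-tight framelet filter bank. -/
def QTFB (a Θ b₁ b₂ : LP) : Prop :=
  sqDom Θ * hstar a * a + hstar b₁ * b₁ - hstar b₂ * b₂ = Θ ∧
  sqDom Θ * hstar a * negSub a + hstar b₁ * negSub b₁ - hstar b₂ * negSub b₂ = 0

/-- The matrix `N_{a,Θ|n_b}` built from the quotients `A`, `B`. -/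
def Nmat (A B : LP) : Matrix (Fin 2) (Fin 2) LP :=
  LaurentPolynomial.C (2 : ℂ)⁻¹ •
    !![cosetL A 0 + cosetL B 0, cosetL A 1 - cosetL B 1;
       T 1 * (cosetL A 1 + cosetL B 1), cosetL A 0 - cosetL B 0]

def mono (s : ℤ) (t : ℂ) : LP := show LP from AddMonoidAlgebra.single s t
lemma coeff_zero (k : ℤ) : coeff (0 : LP) k = 0 := rfl
lemma coeff_add (u v : LP) (k : ℤ) : coeff (u + v) k = coeff u k + coeff v k := rfl
lemma coeff_sub (u v : LP) (k : ℤ) : coeff (u - v) k = coeff u k - coeff v k := rfl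
lemma coeff_mono (s : ℤ) (t : ℂ) (k : ℤ) : coeff (mono s t) k = if s = k then t else 0 :=
  Finsupp.single_apply
lemma coeff_mul_mono (b : LP) (s : ℤ) (t : ℂ) (k : ℤ) :
    coeff (b * mono s t) k = coeff b (k - s) * t :=
  AddMonoidAlgebra.coeff_mul_single_apply b t s k
lemma coeff_invert (u : LP) (k : ℤ) : coeff (LaurentPolynomial.invert u) k = coeff u (-k) :=
  invert_apply u k
lemma mono_mul_mono (s s' : ℤ) (t t' : ℂ) : mono s t * mono s' t' = mono (s+s') (t*t') :=
  AddMonoidAlgebra.single_mul_single s s' t t'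

lemma symT_iff {u : LP} {ε : ℂ} {c : ℤ} :
    SymT u ε c ↔ u = mono c ε * LaurentPolynomial.invert u := by
  have hco : ∀ k, coeff (mono c ε * LaurentPolynomial.invert u) k = ε * coeff u (c - k) := by
    intro k
    have h := AddMonoidAlgebra.coeff_single_mul_apply (LaurentPolynomial.invert u) ε c k
    have h2 : coeff (LaurentPolynomial.invert u) (-c + k) = coeff u (c - k) := by
      rw [coeff_invert]; ring_nf
    exact h.trans (by rw [← h2]; rfl)
  constructor
  · intro h
    exact AddMonoidAlgebra.ext <| Finsupp.ext fun k => by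
      rw [show ((AddMonoidAlgebra.coeff u) k) = coeff u k from rfl, h k, ← hco k]; rfl
  · intro h k
    rw [← hco k, ← h]

lemma sgn_sq {ε : ℂ} (h : Sgn ε) : ε * ε = 1 := by rcases h with h | h <;> simp [h]
lemma sgn_ne {ε : ℂ} (h : Sgn ε) : ε ≠ 0 := by rcases h with h | h <;> simp [h]

lemma symT_zero (ε : ℂ) (c : ℤ) : SymT (0 : LP) ε c := fun k => by
  rw [coeff_zero, coeff_zero, mul_zero]

lemma symT_add {u v : LP} {ε : ℂ} {c : ℤ} (hu : SymT u ε c) (hv : SymT v ε c) :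
    SymT (u + v) ε c := fun k => by rw [coeff_add, coeff_add, hu k, hv k]; ring

lemma symT_sub {u v : LP} {ε : ℂ} {c : ℤ} (hu : SymT u ε c) (hv : SymT v ε c) :
    SymT (u - v) ε c := fun k => by rw [coeff_sub, coeff_sub, hu k, hv k]; ring

lemma symT_mul {u v : LP} {ε ε' : ℂ} {c c' : ℤ} (hu : SymT u ε c) (hv : SymT v ε' c') :
    SymT (u * v) (ε * ε') (c + c') := by
  rw [symT_iff] at hu hv ⊢
  calc u * v = (mono c ε * LaurentPolynomial.invert u) * (mono c' ε' * LaurentPolynomial.invert v) := by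
        rw [← hu, ← hv]
    _ = (mono c ε * mono c' ε') * (LaurentPolynomial.invert u * LaurentPolynomial.invert v) := by
        ring
    _ = mono (c + c') (ε * ε') * LaurentPolynomial.invert (u * v) := by
        rw [mono_mul_mono, _root_.map_mul]

lemma symT_bq {b q : LP} {εa εb : ℂ} {ca cb : ℤ} (hsb : Sgn εb)
    (hb : SymT b εb cb) (hq : SymT q (εa * εb) (ca - cb)) : SymT (b * q) εa ca := by
  have h := symT_mul hb hq
  have h1 : εb * (εa * εb) = εa := by
    have := sgn_sq hsb; linear_combination εa * this
  have h2 : cb + (ca - cb) = ca := by ring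
  rwa [h1, h2] at h

-- degree lemmas
lemma le_degL {u : LP} {k : ℤ} (h : coeff u k ≠ 0) : k ≤ degL u := by
  have hu : u ≠ 0 := by rintro rfl; exact h rfl
  rw [degL, dif_neg hu]
  exact Finset.le_max' _ _ (Finsupp.mem_support_iff.mpr h)

lemma ldegL_le {u : LP} {k : ℤ} (h : coeff u k ≠ 0) : ldegL u ≤ k := by
  have hu : u ≠ 0 := by rintro rfl; exact h rfl
  rw [ldegL, dif_neg hu]
  exact Finset.min'_le _ _ (Finsupp.mem_support_iff.mpr h)

lemma coeff_degL_ne {u : LP} (hu : u ≠ 0) : coeff u (degL u) ≠ 0 := by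
  rw [degL, dif_neg hu]
  exact Finsupp.mem_support_iff.mp (Finset.max'_mem _ _)

lemma coeff_ldegL_ne {u : LP} (hu : u ≠ 0) : coeff u (ldegL u) ≠ 0 := by
  rw [ldegL, dif_neg hu]
  exact Finsupp.mem_support_iff.mp (Finset.min'_mem _ _)

lemma ldegL_le_degL {u : LP} (hu : u ≠ 0) : ldegL u ≤ degL u :=
  ldegL_le (coeff_degL_ne hu)

lemma coeff_eq_zero_of_gt {u : LP} {k : ℤ} (h : degL u < k) : coeff u k = 0 := by
  by_contra h0; exact absurd (le_degL h0) (by omega)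

lemma coeff_eq_zero_of_lt {u : LP} {k : ℤ} (h : k < ldegL u) : coeff u k = 0 := by
  by_contra h0; exact absurd (ldegL_le h0) (by omega)

lemma deg_add_ldeg {u : LP} {ε : ℂ} {c : ℤ} (hu : u ≠ 0) (hε : Sgn ε) (h : SymT u ε c) :
    degL u + ldegL u = c := by
  have hne := sgn_ne hε
  have h1 : coeff u (c - degL u) ≠ 0 := by
    intro h0
    have hd := h (degL u)
    rw [h0, mul_zero] at hd
    exact coeff_degL_ne hu hd
  have h2 : coeff u (c - ldegL u) ≠ 0 := by
    intro h0
    have hd := h (c - ldegL u)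
    rw [h0, show c - (c - ldegL u) = ldegL u by ring] at hd
    exact coeff_ldegL_ne hu (by
      have hd := mul_eq_zero.mp hd.symm
      rcases hd with hd | hd
      · exact absurd hd hne
      · exact hd)
  have := ldegL_le h1
  have := le_degL h2
  omega

lemma step {b r : LP} {εa εb : ℂ} {ca cb : ℤ}
    (hsa : Sgn εa) (hsb : Sgn εb) (hr : SymT r εa ca) (hb : SymT b εb cb)
    (hr0 : r ≠ 0) (hb0 : b ≠ 0)
    (hlen : degL b - ldegL b ≤ degL r - ldegL r)
    (hne : degL r - degL b ≠ ldegL r - ldegL b ∨ εa * εb = 1) :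
    ∃ m : LP, SymT m (εa * εb) (ca - cb) ∧
      ∀ k : ℤ, (k ≤ ldegL r ∨ degL r ≤ k) → coeff (r - b * m) k = 0 := by
  have hcr : degL r + ldegL r = ca := deg_add_ldeg hr0 hsa hr
  have hcb : degL b + ldegL b = cb := deg_add_ldeg hb0 hsb hb
  set d := degL r with hd
  set l := ldegL r with hl
  set D := degL b with hD
  set L := ldegL b with hL
  have hbD : coeff b D ≠ 0 := coeff_degL_ne hb0
  obtain ⟨t, hbDt⟩ : ∃ t : ℂ, coeff b D * t = coeff r d :=
    ⟨coeff r d / coeff b D, by field_simp⟩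
  have hrl : coeff r l = εa * coeff r d := by
    have := hr l; rwa [show ca - l = d by omega] at this
  have hbL : coeff b L = εb * coeff b D := by
    have := hb L; rwa [show cb - L = D by omega] at this
  have hld : l ≤ d := ldegL_le_degL hr0
  have hLD : L ≤ D := ldegL_le_degL hb0
  have hsqb := sgn_sq hsb
  by_cases hss : d - D = l - L
  · -- single-term case; here εa * εb = 1
    have hε : εa * εb = 1 := by
      rcases hne with h | h
      · omega
      · exact h
    have hεab : εa = εb := by linear_combination εb * hε - εa * hsqb
    refine ⟨mono (d - D) t, ?_, ?_⟩
    · intro k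
      rw [coeff_mono, coeff_mono]
      have e1 : (d - D = k) ↔ (d - D = ca - cb - k) := by omega
      by_cases hk : d - D = k
      · rw [if_pos hk, if_pos (e1.mp hk), hε, one_mul]
      · rw [if_neg hk, if_neg (fun h => hk (e1.mpr h)), mul_zero]
    · intro k hk
      rw [coeff_sub, coeff_mul_mono]
      rcases hk with hk | hk
      · rcases eq_or_lt_of_le hk with hkl | hkl
        · -- k = l
          rw [hkl, show l - (d - D) = L by omega, hrl, hbL, hεab]
          linear_combination (-εb) * hbDt
        · rw [coeff_eq_zero_of_lt hkl, coeff_eq_zero_of_lt (show k - (d - D) < L by omega),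
            zero_mul, sub_zero]
      · rcases eq_or_lt_of_le hk with hkl | hkl
        · rw [← hkl, show d - (d - D) = D by omega, hbDt, sub_self]
        · rw [coeff_eq_zero_of_gt hkl, coeff_eq_zero_of_gt (show D < k - (d - D) by omega),
            zero_mul, sub_zero]
  · -- two-term case
    have hssl : l - L < d - D := by omega
    set m : LP := mono (d - D) t + mono (l - L) (εa * εb * t) with hm
    have hcoeffbm : ∀ k, coeff (b * m) k =
        coeff b (k - (d - D)) * t + coeff b (k - (l - L)) * (εa * εb * t) := by
      intro k
      rw [hm, mul_add, coeff_add, coeff_mul_mono, coeff_mul_mono]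
    have hsq : (εa * εb) * (εa * εb) = 1 := by
      have h1 := sgn_sq hsa
      linear_combination εb * εb * h1 + hsqb
    refine ⟨m, ?_, ?_⟩
    · intro k
      rw [hm, coeff_add, coeff_add, coeff_mono, coeff_mono, coeff_mono, coeff_mono]
      have e1 : (d - D = ca - cb - k) ↔ (l - L = k) := by omega
      have e2 : (l - L = ca - cb - k) ↔ (d - D = k) := by omega
      simp only [e1, e2]
      split_ifs <;> first | ring1 | linear_combination (-t) * hsq
    · intro k hk
      rw [coeff_sub, hcoeffbm]
      rcases hk with hk | hk
      · rcases eq_or_lt_of_le hk with hkl | hkl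
        · -- k = l
          rw [hkl, coeff_eq_zero_of_lt (show l - (d - D) < L by omega),
            show l - (l - L) = L by omega, hrl, hbL]
          linear_combination (-εa * εb * εb) * hbDt + (-εa * coeff r d) * hsqb
        · rw [coeff_eq_zero_of_lt hkl, coeff_eq_zero_of_lt (show k - (d - D) < L by omega),
            coeff_eq_zero_of_lt (show k - (l - L) < L by omega)]
          ring
      · rcases eq_or_lt_of_le hk with hkl | hkl
        · -- k = d
          rw [← hkl, show d - (d - D) = D by omega,
            coeff_eq_zero_of_gt (show D < d - (l - L) by omega)]
          linear_combination (-1 : ℂ) * hbDt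
        · rw [coeff_eq_zero_of_gt hkl, coeff_eq_zero_of_gt (show D < k - (d - D) by omega),
            coeff_eq_zero_of_gt (show D < k - (l - L) by omega)]
          ring

lemma main {b : LP} {εa εb : ℂ} {ca cb : ℤ}
    (hsa : Sgn εa) (hsb : Sgn εb) (hb : SymT b εb cb) (hb0 : b ≠ 0) (C : ℤ)
    (hC : ∀ r : LP, r ≠ 0 → SymT r εa ca → C ≤ degL r - ldegL r →
          degL b - ldegL b ≤ degL r - ldegL r ∧
          (degL r - degL b ≠ ldegL r - ldegL b ∨ εa * εb = 1)) :
    ∀ n : ℕ, ∀ a : LP, SymT a εa ca → (degL a - ldegL a).toNat ≤ n →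
      ∃ q : LP, SymT q (εa * εb) (ca - cb) ∧
        (a - b * q = 0 ∨ (a - b * q ≠ 0 ∧ degL (a - b * q) - ldegL (a - b * q) < C)) := by
  intro n
  induction n using Nat.strong_induction_on with
  | _ n ih =>
  intro a ha hna
  by_cases ha0 : a = 0
  · exact ⟨0, symT_zero _ _, Or.inl (by rw [ha0, mul_zero, sub_zero])⟩
  by_cases hlt : degL a - ldegL a < C
  · exact ⟨0, symT_zero _ _, Or.inr ⟨by rwa [mul_zero, sub_zero], by rwa [mul_zero, sub_zero]⟩⟩
  push_neg at hlt
  obtain ⟨hlen, hne⟩ := hC a ha0 ha hlt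
  obtain ⟨m, hm, hv⟩ := step hsa hsb ha hb ha0 hb0 hlen hne
  by_cases hr0 : a - b * m = 0
  · exact ⟨m, hm, Or.inl hr0⟩
  · have h1 : ldegL a + 1 ≤ ldegL (a - b * m) := by
      by_contra h
      push_neg at h
      exact coeff_ldegL_ne hr0 (hv _ (Or.inl (by omega)))
    have h2 : degL (a - b * m) ≤ degL a - 1 := by
      by_contra h
      push_neg at h
      exact coeff_degL_ne hr0 (hv _ (Or.inr (by omega)))
    have h3 : ldegL (a - b * m) ≤ degL (a - b * m) := ldegL_le_degL hr0
    have h4 : ldegL a ≤ degL a := ldegL_le_degL ha0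
    have h5 : degL b - ldegL b ≤ degL a - ldegL a := hlen
    have h6 : ldegL b ≤ degL b := ldegL_le_degL hb0
    have hsym' : SymT (a - b * m) εa ca := symT_sub ha (symT_bq hsb hb hm)
    have hmeas : (degL (a - b * m) - ldegL (a - b * m)).toNat < n := by omega
    obtain ⟨q', hq', hres⟩ := ih _ hmeas (a - b * m) hsym' le_rfl
    refine ⟨m + q', symT_add hm hq', ?_⟩
    have heq : a - b * (m + q') = (a - b * m) - b * q' := by ring
    rw [heq]
    exact hres


/-- long division for Laurent polynomials with symmetry
(Lemma 3.5 of the paper). -/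
theorem long_division_with_symmetry
    (a b : LP) (εa εb : ℂ) (ca cb : ℤ) (hεa : Sgn εa) (hεb : Sgn εb)
    (ha : SymT a εa ca) (hb : SymT b εb cb) (hb0 : b ≠ 0) :
    ((εa * εb = 1 ∨ (εa * εb = -1 ∧ Odd (ca - cb))) →
      ∃ q : LP, SymT q (εa * εb) (ca - cb) ∧
        SymT (a - b * q) εa ca ∧ lenL (a - b * q) < lenL b) ∧
    ((εa * εb = -1 ∧ Even (ca - cb)) →
      ∃ q : LP, SymT q (εa * εb) (ca - cb) ∧
        SymT (a - b * q) εa ca ∧ lenL (a - b * q) ≤ lenL b) := by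
  have hlb : lenL b = ((degL b - ldegL b : ℤ) : WithBot ℤ) := if_neg hb0
  constructor
  · intro hcase
    have hC : ∀ r : LP, r ≠ 0 → SymT r εa ca → degL b - ldegL b ≤ degL r - ldegL r →
        degL b - ldegL b ≤ degL r - ldegL r ∧
        (degL r - degL b ≠ ldegL r - ldegL b ∨ εa * εb = 1) := by
      intro r hr0 hrs hge
      refine ⟨hge, ?_⟩
      rcases hcase with h | ⟨h, hodd⟩
      · exact Or.inr h
      · left
        have e1 := deg_add_ldeg hr0 hεa hrs
        have e2 := deg_add_ldeg hb0 hεb hb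
        obtain ⟨j, hj⟩ := hodd
        omega
    obtain ⟨q, hq, hres⟩ := main hεa hεb hb hb0 (degL b - ldegL b) hC
      (degL a - ldegL a).toNat a ha le_rfl
    refine ⟨q, hq, symT_sub ha (symT_bq hεb hb hq), ?_⟩
    rcases hres with h | ⟨h0, h⟩
    · rw [lenL, if_pos h, hlb]
      exact WithBot.bot_lt_coe _
    · rw [lenL, if_neg h0, hlb]
      exact_mod_cast h
  · intro hcase
    have hC : ∀ r : LP, r ≠ 0 → SymT r εa ca → degL b - ldegL b + 1 ≤ degL r - ldegL r →
        degL b - ldegL b ≤ degL r - ldegL r ∧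
        (degL r - degL b ≠ ldegL r - ldegL b ∨ εa * εb = 1) := by
      intro r hr0 hrs hge
      exact ⟨by omega, Or.inl (by omega)⟩
    obtain ⟨q, hq, hres⟩ := main hεa hεb hb hb0 (degL b - ldegL b + 1) hC
      (degL a - ldegL a).toNat a ha le_rfl
    refine ⟨q, hq, symT_sub ha (symT_bq hεb hb hq), ?_⟩
    rcases hres with h | ⟨h0, h⟩
    · rw [lenL, if_pos h]
      exact bot_le
    · rw [lenL, if_neg h0, hlb]
      exact_mod_cast (by omega : degL (a - b*q) - ldegL (a - b*q) ≤ degL b - ldegL b)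


end QT
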